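/- Let p be a prime and N = pM with p ∤ M. For γ = (a b; c d) ∈ Γ₀(N) set α_γ := (a pb; c/p d) ∈ Γ₀(M). Fix a matrix ω_M = (px y; Mz w) ∈ SL₂(ℤ) (such a matrix exists since gcd(p,M) = 1). Then the coset space Γ∞\Γ₀(M) is the disjoint union of the two sets of cosets {Γ∞·γ : γ ∈ Γ₀(N)} and {Γ∞·(α_γ·ω_M) : γ ∈ Γ₀(N)}. -/

import Mathlib

open Matrix MatrixGroups

local notation "SL2Z" => Matrix.SpecialLinearGroup (Fin 2) ℤ

/-- `Γ₀(K)` as a set of elements of `SL(2,ℤ)`. -/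
def Gamma0' (K : ℤ) : Set SL2Z := { γ | K ∣ γ.1 1 0 }

/-- The translation matrix `T = (1 1; 0 1)`. -/
def Tmat : SL2Z := ⟨!![1, 1; 0, 1], by norm_num [Matrix.det_fin_two_of]⟩

/-- `Γ∞ = {±T^t : t ∈ ℤ}`. -/
def GammaInf : Set SL2Z := { A | ∃ t : ℤ, A = Tmat ^ t ∨ A = -(Tmat ^ t) }

/-- The right coset `Γ∞ · δ`. -/
def cosetOf (δ : SL2Z) : Set SL2Z := { x | ∃ u ∈ GammaInf, x = u * δ }

/-- The coset space `Γ∞ \ Γ₀(K)`, as a set of cosets. -/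
def cosets (K : ℤ) : Set (Set SL2Z) := { C | ∃ δ ∈ Gamma0' K, C = cosetOf δ }

/-- The set of cosets `Γ∞ · (α_γ ω)`, `γ ∈ Γ₀(pM)`, where `α_γ = (a pb; c/p d)`. -/
def alphaOmegaSet (p M : ℕ) (ω : SL2Z) : Set (Set SL2Z) :=
  { C | ∃ γ ∈ Gamma0' ((p : ℤ) * M), ∃ α : SL2Z,
      α.1 0 0 = γ.1 0 0 ∧ α.1 0 1 = (p : ℤ) * γ.1 0 1 ∧
      (p : ℤ) * α.1 1 0 = γ.1 1 0 ∧ α.1 1 1 = γ.1 1 1 ∧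
      C = cosetOf (α * ω) }

lemma Tmat_eq_T : Tmat = ModularGroup.T := by
  apply Subtype.ext; rfl

lemma coe_Tmat_zpow (t : ℤ) : ((Tmat ^ t : SL2Z)).1 = !![1, t; 0, 1] := by
  rw [Tmat_eq_T]; exact ModularGroup.coe_T_zpow t

lemma one_mem_GammaInf : (1 : SL2Z) ∈ GammaInf := ⟨0, Or.inl (zpow_zero _).symm⟩

lemma mul_mem_GammaInf {u v : SL2Z} (hu : u ∈ GammaInf) (hv : v ∈ GammaInf) :
    u * v ∈ GammaInf := by
  obtain ⟨s, hs | hs⟩ := hu <;> obtain ⟨t, ht | ht⟩ := hv <;>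
    refine ⟨s + t, ?_⟩ <;> rw [hs, ht] <;>
    simp [_root_.zpow_add, neg_mul, mul_neg]

lemma inv_mem_GammaInf {u : SL2Z} (hu : u ∈ GammaInf) : u⁻¹ ∈ GammaInf := by
  obtain ⟨t, ht | ht⟩ := hu
  · exact ⟨-t, Or.inl (by rw [ht, _root_.zpow_neg])⟩
  · refine ⟨-t, Or.inr ?_⟩
    rw [ht]
    refine inv_eq_of_mul_eq_one_right ?_
    rw [neg_mul_neg, ← _root_.zpow_add, add_neg_cancel, zpow_zero]

lemma cosetOf_smul {u : SL2Z} (hu : u ∈ GammaInf) (δ : SL2Z) :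
    cosetOf (u * δ) = cosetOf δ := by
  ext x
  constructor
  · rintro ⟨v, hv, rfl⟩
    exact ⟨v * u, mul_mem_GammaInf hv hu, by rw [mul_assoc]⟩
  · rintro ⟨v, hv, rfl⟩
    exact ⟨v * u⁻¹, mul_mem_GammaInf hv (inv_mem_GammaInf hu), by group⟩

lemma coe_mul_entry (A B : SL2Z) (i j : Fin 2) :
    (A * B).1 i j = A.1 i 0 * B.1 0 j + A.1 i 1 * B.1 1 j := by
  simp [Matrix.mul_apply, Fin.sum_univ_two]

lemma coset_eq_of_bottom_row {δ₁ δ₂ : SL2Z} (h0 : δ₁.1 1 0 = δ₂.1 1 0)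
    (h1 : δ₁.1 1 1 = δ₂.1 1 1) : cosetOf δ₁ = cosetOf δ₂ := by
  have hinv := Matrix.SpecialLinearGroup.SL2_inv_expl δ₂
  set X := δ₁ * δ₂⁻¹ with hXdef
  have hi00 : (δ₂⁻¹).1 0 0 = δ₂.1 1 1 := by rw [hinv]; rfl
  have hi01 : (δ₂⁻¹).1 0 1 = -δ₂.1 0 1 := by rw [hinv]; rfl
  have hi10 : (δ₂⁻¹).1 1 0 = -δ₂.1 1 0 := by rw [hinv]; rfl
  have hi11 : (δ₂⁻¹).1 1 1 = δ₂.1 0 0 := by rw [hinv]; rfl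
  have hdet2 : δ₂.1 0 0 * δ₂.1 1 1 - δ₂.1 0 1 * δ₂.1 1 0 = 1 := by
    rw [← Matrix.det_fin_two]; exact δ₂.2
  have h10 : X.1 1 0 = 0 := by
    rw [hXdef, coe_mul_entry, hi00, hi10, h0, h1]; ring
  have h11 : X.1 1 1 = 1 := by
    rw [hXdef, coe_mul_entry, hi01, hi11, h0, h1]; linarith [hdet2]
  have hdetX : X.1 0 0 * X.1 1 1 - X.1 0 1 * X.1 1 0 = 1 := by
    rw [← Matrix.det_fin_two]; exact X.2
  have h00 : X.1 0 0 = 1 := by rw [h10, h11] at hdetX; linarith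
  have hX : X = Tmat ^ (X.1 0 1) := by
    apply Subtype.ext
    rw [coe_Tmat_zpow]
    conv_lhs => rw [Matrix.eta_fin_two X.1]
    rw [h00, h10, h11]
  have : δ₁ = X * δ₂ := by rw [hXdef]; group
  rw [this, hX]
  exact cosetOf_smul ⟨_, Or.inl rfl⟩ δ₂

lemma bottom_of_mem_GammaInf {u : SL2Z} (hu : u ∈ GammaInf) (δ : SL2Z) :
    (u * δ).1 1 0 = δ.1 1 0 ∨ (u * δ).1 1 0 = -(δ.1 1 0) := by
  obtain ⟨t, ht | ht⟩ := hu
  · left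
    rw [coe_mul_entry, ht, coe_Tmat_zpow]
    simp
  · right
    rw [coe_mul_entry, ht]
    have : (-(Tmat ^ t) : SL2Z).1 = -(!![1, t; 0, 1]) := by
      rw [← coe_Tmat_zpow t]; rfl
    rw [this]
    simp

theorem statement1 (p M : ℕ) (hp : p.Prime) (hM : 0 < M) (hpM : ¬ p ∣ M)
    (ω : SL2Z) (hω : ∃ x y z w : ℤ, ω.1 = !![(p : ℤ) * x, y; (M : ℤ) * z, w]) :
    cosets (M : ℤ) =
        { C | ∃ γ ∈ Gamma0' ((p : ℤ) * M), C = cosetOf γ } ∪ alphaOmegaSet p M ω ∧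
    { C | ∃ γ ∈ Gamma0' ((p : ℤ) * M), C = cosetOf γ } ∩ alphaOmegaSet p M ω = ∅ := by
  obtain ⟨x, y, z, w, hωm⟩ := hω
  have hω00 : ω.1 0 0 = (p : ℤ) * x := by rw [hωm]; rfl
  have hω01 : ω.1 0 1 = y := by rw [hωm]; rfl
  have hω10 : ω.1 1 0 = (M : ℤ) * z := by rw [hωm]; rfl
  have hω11 : ω.1 1 1 = w := by rw [hωm]; rfl
  have hdetω : (p : ℤ) * x * w - y * ((M : ℤ) * z) = 1 := by
    have h2 := ω.2
    rw [Matrix.det_fin_two, hω00, hω01, hω10, hω11] at h2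
    linarith
  have hpZ : Prime (p : ℤ) := Nat.prime_iff_prime_int.mp hp
  have hpy : ¬ (p : ℤ) ∣ y := fun ⟨k, hk⟩ =>
    hpZ.not_dvd_one ⟨x * w - k * ((M : ℤ) * z), by linear_combination -hdetω - (M:ℤ)*z*hk⟩
  have hpz : ¬ (p : ℤ) ∣ z := fun ⟨k, hk⟩ =>
    hpZ.not_dvd_one ⟨x * w - y * ((M : ℤ) * k), by linear_combination -hdetω - y*(M:ℤ)*hk⟩
  have hpMZ : ¬ (p : ℤ) ∣ (M : ℤ) := fun h => hpM (by exact_mod_cast h)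
  have hcop : IsCoprime (p : ℤ) (M : ℤ) := hpZ.coprime_iff_not_dvd.mpr hpMZ
  constructor
  · ext C
    simp only [Set.mem_union]
    constructor
    · rintro ⟨δ, hδ, rfl⟩
      by_cases hpc : (p : ℤ) ∣ δ.1 1 0
      · exact Or.inl ⟨δ, hcop.mul_dvd hpc hδ, rfl⟩
      · right
        have hdetδ : δ.1 0 0 * δ.1 1 1 - δ.1 0 1 * δ.1 1 0 = 1 := by
          rw [← Matrix.det_fin_two]; exact δ.2
        set c := δ.1 1 0 with hc'
        set d := δ.1 1 1 with hd'
        set C' := c * w - d * ((M : ℤ) * z) with hC'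
        set D' := d * ((p : ℤ) * x) - c * y with hD'
        have hc : C' * ((p : ℤ) * x) + D' * ((M : ℤ) * z) = c := by
          rw [hC', hD']; linear_combination c * hdetω
        have hd : C' * y + D' * w = d := by
          rw [hC', hD']; linear_combination d * hdetω
        have hpD : ¬ (p : ℤ) ∣ D' := by
          intro h
          have hcy : (p : ℤ) ∣ c * y := by
            have he : c * y = d * ((p : ℤ) * x) - D' := by rw [hD']; ring
            rw [he]
            exact dvd_sub ⟨d * x, by ring⟩ h
          rcases hpZ.dvd_mul.mp hcy with h' | h'
          · exact hpc h'
          · exact hpy h'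
        have hCD : IsCoprime C' D' := by
          obtain ⟨u, v, huv⟩ : IsCoprime c d := ⟨-δ.1 0 1, δ.1 0 0, by linear_combination hdetδ⟩
          exact ⟨u * ((p : ℤ) * x) + v * y, u * ((M : ℤ) * z) + v * w,
            by linear_combination u * hc + v * hd + huv⟩
        have hDpC : IsCoprime D' ((p : ℤ) * C') :=
          ((hpZ.coprime_iff_not_dvd.mpr hpD).symm).mul_right hCD.symm
        obtain ⟨A, B, hAB⟩ := hDpC
        -- hAB : A * D' + B * ((p:ℤ) * C') = 1
        refine ⟨⟨!![A, -B; (p : ℤ) * C', D'], by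
            rw [Matrix.det_fin_two_of]; linear_combination hAB⟩, ?_,
          ⟨!![A, (p : ℤ) * -B; C', D'], by
            rw [Matrix.det_fin_two_of]; linear_combination hAB⟩, rfl, rfl, rfl, rfl, ?_⟩
        · show (p : ℤ) * M ∣ (!![A, -B; (p : ℤ) * C', D'] : Matrix (Fin 2) (Fin 2) ℤ) 1 0
          show (p : ℤ) * M ∣ (p : ℤ) * C'
          have hMC : (M : ℤ) ∣ C' := by
            rw [hC']
            exact dvd_sub (hδ.mul_right w) ⟨d * z, by ring⟩
          exact mul_dvd_mul_left _ hMC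
        · refine coset_eq_of_bottom_row ?_ ?_
          · refine Eq.trans ?_ (coe_mul_entry _ ω 1 0).symm
            rw [hω00, hω10]
            show c = C' * ((p : ℤ) * x) + D' * ((M : ℤ) * z)
            exact hc.symm
          · refine Eq.trans ?_ (coe_mul_entry _ ω 1 1).symm
            rw [hω01, hω11]
            show d = C' * y + D' * w
            exact hd.symm
    · rintro (⟨γ, hγ, rfl⟩ | ⟨γ, hγ, α, h00, h01, h10, h11, rfl⟩)
      · exact ⟨γ, dvd_trans (Dvd.intro_left _ rfl) hγ, rfl⟩
      · refine ⟨α * ω, ?_, rfl⟩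
        show (M : ℤ) ∣ (α * ω).1 1 0
        rw [coe_mul_entry, hω00, hω10]
        have hMα : (M : ℤ) ∣ α.1 1 0 := by
          obtain ⟨k, hk⟩ := hγ
          rw [← h10] at hk
          have hp0 : (p : ℤ) ≠ 0 := by exact_mod_cast hp.ne_zero
          refine ⟨k, mul_left_cancel₀ hp0 ?_⟩
          rw [hk]; ring
        exact dvd_add (hMα.mul_right _) ⟨α.1 1 1 * z, by ring⟩
  · rw [Set.eq_empty_iff_forall_notMem]
    rintro C ⟨⟨γ₁, hγ₁, rfl⟩, γ₂, hγ₂, α, h00, h01, h10, h11, hC⟩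
    have hγmem : γ₁ ∈ cosetOf (α * ω) := by
      rw [← hC]; exact ⟨1, one_mem_GammaInf, (one_mul _).symm⟩
    obtain ⟨u, hu, hγu⟩ := hγmem
    have hpγ : (p : ℤ) ∣ γ₁.1 1 0 := dvd_trans (dvd_mul_right _ _) hγ₁
    have hpαω : (p : ℤ) ∣ (α * ω).1 1 0 := by
      rcases bottom_of_mem_GammaInf hu (α * ω) with h | h <;> rw [hγu, h] at hpγ
      · exact hpγ
      · exact (dvd_neg).mp hpγ
    rw [coe_mul_entry, hω00, hω10] at hpαω
    have hpterm : (p : ℤ) ∣ α.1 1 1 * ((M : ℤ) * z) := by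
      have : α.1 1 1 * ((M : ℤ) * z) =
          (α.1 1 0 * ((p : ℤ) * x) + α.1 1 1 * ((M : ℤ) * z)) - (p : ℤ) * (α.1 1 0 * x) := by ring
      rw [this]
      exact dvd_sub hpαω ⟨α.1 1 0 * x, rfl⟩
    have hpα11 : (p : ℤ) ∣ α.1 1 1 := by
      rcases hpZ.dvd_mul.mp hpterm with h | h
      · exact h
      · rcases hpZ.dvd_mul.mp h with h' | h'
        · exact absurd h' hpMZ
        · exact absurd h' hpz
    have hdetα : α.1 0 0 * α.1 1 1 - α.1 0 1 * α.1 1 0 = 1 := by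
      rw [← Matrix.det_fin_two]; exact α.2
    apply hpZ.not_dvd_one
    rw [← hdetα]
    exact dvd_sub (hpα11.mul_left _) (by rw [h01]; exact ⟨γ₂.1 0 1 * α.1 1 0, by ring⟩)
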